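/- Let A = [[α, β], [γ, δ]] be a real 2×2 matrix with determinant 1 (A ∈ SL(2,ℝ)), and define the complex numbers p := (α − iβ + iγ + δ)/2 and q := (α + iβ + iγ − δ)/2. Then: (i) A is symmetric and positive definite if and only if p is real and p > 0. (ii) In that case, τ := q/p satisfies |τ| < 1, one has 1/p = √(1 − |τ|²), and A = (1 − |τ|²)^{−1/2} · [[1 + Re τ, Im τ], [Im τ, 1 − Re τ]]. (iii) Conversely, for every τ ∈ ℂ with |τ| < 1, the matrix A^τ := (1 − |τ|²)^{−1/2} · [[1 + Re τ, Im τ], [Im τ, 1 − Re τ]] is the unique symmetric positive-definite element of SL(2,ℝ) whose associated ratio q/p equals τ. -/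

import Mathlib

open Matrix

noncomputable section

/-- The complex number `p = (α - iβ + iγ + δ)/2` in the complex-variables representation of a
real 2×2 matrix `A = [[α, β], [γ, δ]]` (the map `z ↦ p z + q conj z`). -/
def pOf (A : Matrix (Fin 2) (Fin 2) ℝ) : ℂ :=
  (((A 0 0 : ℝ) : ℂ) - Complex.I * ((A 0 1 : ℝ) : ℂ) + Complex.I * ((A 1 0 : ℝ) : ℂ) +
      ((A 1 1 : ℝ) : ℂ)) / 2

/-- The complex number `q = (α + iβ + iγ - δ)/2` in the complex-variables representation of a
real 2×2 matrix `A = [[α, β], [γ, δ]]`. -/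
def qOf (A : Matrix (Fin 2) (Fin 2) ℝ) : ℂ :=
  (((A 0 0 : ℝ) : ℂ) + Complex.I * ((A 0 1 : ℝ) : ℂ) + Complex.I * ((A 1 0 : ℝ) : ℂ) -
      ((A 1 1 : ℝ) : ℂ)) / 2

/-- The positive symmetric matrix
`A^τ = (1-|τ|²)^{-1/2} [[1 + Re τ, Im τ], [Im τ, 1 - Re τ]]` associated to `τ` in the unit
disk. -/
def Amatrix (τ : ℂ) : Matrix (Fin 2) (Fin 2) ℝ :=
  (Real.sqrt (1 - ‖τ‖ ^ 2))⁻¹ • !![1 + τ.re, τ.im; τ.im, 1 - τ.re]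

lemma pOf_re (A : Matrix (Fin 2) (Fin 2) ℝ) : (pOf A).re = (A 0 0 + A 1 1) / 2 := by
  simp [pOf, Complex.div_re]
lemma pOf_im (A : Matrix (Fin 2) (Fin 2) ℝ) : (pOf A).im = (A 1 0 - A 0 1) / 2 := by
  simp [pOf, Complex.div_im]
  ring
lemma qOf_re (A : Matrix (Fin 2) (Fin 2) ℝ) : (qOf A).re = (A 0 0 - A 1 1) / 2 := by
  simp [qOf, Complex.div_re]
lemma qOf_im (A : Matrix (Fin 2) (Fin 2) ℝ) : (qOf A).im = (A 0 1 + A 1 0) / 2 := by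
  simp [qOf, Complex.div_im]

lemma det2 (A : Matrix (Fin 2) (Fin 2) ℝ) : A.det = A 0 0 * A 1 1 - A 0 1 * A 1 0 := by
  simp [Matrix.det_fin_two]

lemma isSymm_entry {A : Matrix (Fin 2) (Fin 2) ℝ} (h : A.IsSymm) : A 1 0 = A 0 1 := by
  have := congrFun (congrFun h 0) 1
  simpa [Matrix.transpose_apply] using this

lemma isSymm_of {A : Matrix (Fin 2) (Fin 2) ℝ} (h : A 1 0 = A 0 1) : A.IsSymm := by
  rw [Matrix.IsSymm]
  ext i j
  fin_cases i <;> fin_cases j <;> simp [Matrix.transpose_apply, h]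

lemma posdef2 (A : Matrix (Fin 2) (Fin 2) ℝ) (hA : A.det = 1) (hsym : A 1 0 = A 0 1)
    (htr : 0 < A 0 0 + A 1 1) : A.PosDef := by
  rw [det2, hsym] at hA
  have ha : 0 < A 0 0 := by
    by_contra h
    push_neg at h
    have h11 : 0 < A 1 1 := by linarith
    nlinarith [sq_nonneg (A 0 1)]
  rw [Matrix.posDef_iff_dotProduct_mulVec]
  constructor
  · rw [Matrix.IsHermitian, Matrix.conjTranspose_eq_transpose_of_trivial]
    ext i j
    fin_cases i <;> fin_cases j <;> simp [hsym]
  · intro x hx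
    have hx' : x 0 ≠ 0 ∨ x 1 ≠ 0 := by
      by_contra h
      push_neg at h
      exact hx (funext fun i => by fin_cases i <;> simp [h.1, h.2])
    have expand : dotProduct (star x) (A *ᵥ x) =
        A 0 0 * x 0 ^ 2 + 2 * A 0 1 * x 0 * x 1 + A 1 1 * x 1 ^ 2 := by
      simp [dotProduct, Matrix.mulVec, Fin.sum_univ_two, hsym]
      ring
    rw [expand]
    have hd : A 0 0 * A 1 1 - A 0 1 * A 0 1 = 1 := by linarith
    have key : A 0 0 * (A 0 0 * x 0 ^ 2 + 2 * A 0 1 * x 0 * x 1 + A 1 1 * x 1 ^ 2) =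
        (A 0 0 * x 0 + A 0 1 * x 1) ^ 2 + x 1 ^ 2 := by
      linear_combination (x 1) ^ 2 * hd
    have hpos : 0 < (A 0 0 * x 0 + A 0 1 * x 1) ^ 2 + x 1 ^ 2 := by
      rcases eq_or_ne (x 1) 0 with h1 | h1
      · have h0 : x 0 ≠ 0 := by tauto
        have hne : A 0 0 * x 0 + A 0 1 * x 1 ≠ 0 := by
          rw [h1]; simpa using mul_ne_zero ha.ne' h0
        have := sq_pos_of_ne_zero hne
        nlinarith [sq_nonneg (x 1)]
      · nlinarith [sq_nonneg (A 0 0 * x 0 + A 0 1 * x 1), sq_pos_of_ne_zero h1]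
    nlinarith [key, hpos, ha]

lemma posdef_diag (A : Matrix (Fin 2) (Fin 2) ℝ) (h : A.PosDef) : 0 < A 0 0 ∧ 0 < A 1 1 := by
  constructor
  · have := (posDef_iff_dotProduct_mulVec.mp h).2 (x := Pi.single 0 1) (by intro hc; simpa using congrFun hc 0)
    simpa [dotProduct, Matrix.mulVec, Fin.sum_univ_two, Pi.single_apply] using this
  · have := (posDef_iff_dotProduct_mulVec.mp h).2 (x := Pi.single 1 1) (by intro hc; simpa using congrFun hc 1)
    simpa [dotProduct, Matrix.mulVec, Fin.sum_univ_two, Pi.single_apply] using this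

lemma main_pos (A : Matrix (Fin 2) (Fin 2) ℝ) (hA : A.det = 1) (hs : A 1 0 = A 0 1)
    (hr : 0 < (pOf A).re) (hi : (pOf A).im = 0) :
    ‖qOf A / pOf A‖ < 1 ∧
      (pOf A)⁻¹ = ((Real.sqrt (1 - ‖qOf A / pOf A‖ ^ 2) : ℝ) : ℂ) ∧
      A = Amatrix (qOf A / pOf A) := by
  set r := (pOf A).re with hrdef
  have hp : pOf A = (r : ℂ) := Complex.ext rfl (by simp [hi])
  have hp0 : pOf A ≠ 0 := by rw [hp]; exact_mod_cast hr.ne'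
  have hd : Complex.normSq (pOf A) - Complex.normSq (qOf A) = 1 := by
    rw [det2] at hA
    simp only [Complex.normSq_apply, pOf_re, pOf_im, qOf_re, qOf_im]
    linear_combination hA
  have hnp : Complex.normSq (pOf A) = r ^ 2 := by rw [hp]; simp [Complex.normSq_apply, sq]
  have hnq : Complex.normSq (qOf A) = r ^ 2 - 1 := by linarith
  have habs2 : ‖qOf A / pOf A‖ ^ 2 = 1 - 1 / r ^ 2 := by
    rw [Complex.sq_norm, map_div₀, hnq, hnp]
    field_simp
  have hr2 : 0 < 1 / r ^ 2 := by positivity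
  have hlt : ‖qOf A / pOf A‖ < 1 := by
    nlinarith [norm_nonneg (qOf A / pOf A)]
  have hsqrt : Real.sqrt (1 - ‖qOf A / pOf A‖ ^ 2) = r⁻¹ := by
    rw [habs2]
    have : (1 : ℝ) - (1 - 1 / r ^ 2) = (r⁻¹) ^ 2 := by field_simp; ring
    rw [this, Real.sqrt_sq (by positivity)]
  refine ⟨hlt, ?_, ?_⟩
  · rw [hsqrt, hp, ← Complex.ofReal_inv]
  · have hτre : (qOf A / pOf A).re = (qOf A).re / r := by
      rw [hp, Complex.div_ofReal_re]
    have hτim : (qOf A / pOf A).im = (qOf A).im / r := by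
      rw [hp, Complex.div_ofReal_im]
    have hrp : r = (A 0 0 + A 1 1) / 2 := by rw [hrdef, pOf_re]
    ext i j
    fin_cases i <;> fin_cases j <;>
      · simp only [Amatrix, hsqrt, inv_inv, Matrix.smul_apply, Matrix.cons_val', Matrix.cons_val_zero,
          Matrix.cons_val_one, Matrix.head_cons, Matrix.head_fin_const, Matrix.empty_val',
          Matrix.cons_val_fin_one, smul_eq_mul, Fin.zero_eta, Fin.mk_one, Fin.isValue, Matrix.of_apply, hτre, hτim, qOf_re, qOf_im]
        field_simp
        first
          | linear_combination (-2*r) * hrp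
          | linear_combination (-r) * hs
          | linear_combination r * hs
          | linear_combination (-2) * hrp
          | linear_combination (-1) * hs
          | linear_combination hs

lemma Amatrix_entries (τ : ℂ) :
    Amatrix τ 0 0 = (Real.sqrt (1 - ‖τ‖ ^ 2))⁻¹ * (1 + τ.re) ∧
    Amatrix τ 0 1 = (Real.sqrt (1 - ‖τ‖ ^ 2))⁻¹ * τ.im ∧
    Amatrix τ 1 0 = (Real.sqrt (1 - ‖τ‖ ^ 2))⁻¹ * τ.im ∧
    Amatrix τ 1 1 = (Real.sqrt (1 - ‖τ‖ ^ 2))⁻¹ * (1 - τ.re) := by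
  refine ⟨?_, ?_, ?_, ?_⟩ <;> simp [Amatrix]

lemma part3 (τ : ℂ) (hτ : ‖τ‖ < 1) :
    (Amatrix τ).det = 1 ∧ (Amatrix τ) 1 0 = (Amatrix τ) 0 1 ∧
      0 < (Amatrix τ) 0 0 + (Amatrix τ) 1 1 ∧
      qOf (Amatrix τ) / pOf (Amatrix τ) = τ := by
  obtain ⟨e00, e01, e10, e11⟩ := Amatrix_entries τ
  have habs : ‖τ‖ ^ 2 = τ.re ^ 2 + τ.im ^ 2 := by
    rw [Complex.sq_norm, Complex.normSq_apply]; ring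
  have h1 : 0 < 1 - ‖τ‖ ^ 2 := by
    nlinarith [norm_nonneg τ]
  set s := Real.sqrt (1 - ‖τ‖ ^ 2) with hsdef
  have hs : 0 < s := Real.sqrt_pos.2 h1
  have hs2 : s ^ 2 = 1 - ‖τ‖ ^ 2 := Real.sq_sqrt h1.le
  have hre : τ.re ^ 2 + τ.im ^ 2 = 1 - s ^ 2 := by rw [hs2, habs]; ring
  refine ⟨?_, ?_, ?_, ?_⟩
  · rw [det2, e00, e01, e10, e11]
    field_simp
    linear_combination -hre
  · rw [e01, e10]
  · rw [e00, e11]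
    have : s⁻¹ * (1 + τ.re) + s⁻¹ * (1 - τ.re) = 2 * s⁻¹ := by ring
    rw [this]; positivity
  · have hpre : (pOf (Amatrix τ)).re = s⁻¹ := by
      rw [pOf_re, e00, e11]; ring
    have hpim : (pOf (Amatrix τ)).im = 0 := by
      rw [pOf_im, e01, e10]; ring
    have hqre : (qOf (Amatrix τ)).re = s⁻¹ * τ.re := by
      rw [qOf_re, e00, e11]; ring
    have hqim : (qOf (Amatrix τ)).im = s⁻¹ * τ.im := by
      rw [qOf_im, e01, e10]; ring
    have hp : pOf (Amatrix τ) = ((s⁻¹ : ℝ) : ℂ) :=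
      Complex.ext (by rw [hpre]; simp) (by simp [hpim])
    have hq : qOf (Amatrix τ) = ((s⁻¹ : ℝ) : ℂ) * τ := by
      apply Complex.ext <;> simp [hqre, hqim]
    rw [hp, hq]
    have hne : ((s⁻¹ : ℝ) : ℂ) ≠ 0 := by
      simp [hs.ne']
    exact mul_div_cancel_left₀ τ hne

/-- for `A ∈ SL(2,ℝ)` with associated complex parameters `p, q`:
(i) `A` is symmetric positive definite iff `p` is real and positive; (ii) in that case
`τ = q/p` satisfies `|τ| < 1`, `1/p = √(1-|τ|²)` and `A = A^τ`; (iii) conversely every `τ` in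
the unit disk arises from a unique symmetric positive-definite element of `SL(2,ℝ)`. -/
theorem sl2_positive_symmetric_parametrization (A : Matrix (Fin 2) (Fin 2) ℝ)
    (hA : A.det = 1) :
    ((A.IsSymm ∧ A.PosDef) ↔ ((pOf A).im = 0 ∧ 0 < (pOf A).re)) ∧
    (A.IsSymm → A.PosDef →
      ‖qOf A / pOf A‖ < 1 ∧
      (pOf A)⁻¹ = ((Real.sqrt (1 - ‖qOf A / pOf A‖ ^ 2) : ℝ) : ℂ) ∧
      A = Amatrix (qOf A / pOf A)) ∧
    (∀ τ : ℂ, ‖τ‖ < 1 →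
      (Amatrix τ).det = 1 ∧ (Amatrix τ).IsSymm ∧ (Amatrix τ).PosDef ∧
      qOf (Amatrix τ) / pOf (Amatrix τ) = τ ∧
      ∀ B : Matrix (Fin 2) (Fin 2) ℝ, B.det = 1 → B.IsSymm → B.PosDef →
        qOf B / pOf B = τ → B = Amatrix τ) := by
  refine ⟨⟨?_, ?_⟩, ?_, ?_⟩
  · rintro ⟨hsym, hpd⟩
    have hd := posdef_diag A hpd
    refine ⟨by rw [pOf_im, isSymm_entry hsym]; ring, by rw [pOf_re]; linarith [hd.1, hd.2]⟩
  · rintro ⟨hi, hr⟩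
    have hs : A 1 0 = A 0 1 := by rw [pOf_im] at hi; linarith
    have htr : 0 < A 0 0 + A 1 1 := by rw [pOf_re] at hr; linarith
    exact ⟨isSymm_of hs, posdef2 A hA hs htr⟩
  · intro hsym hpd
    have hd := posdef_diag A hpd
    exact main_pos A hA (isSymm_entry hsym) (by rw [pOf_re]; linarith [hd.1, hd.2])
      (by rw [pOf_im, isSymm_entry hsym]; ring)
  · intro τ hτ
    obtain ⟨hdet, hsym', htr, hqp⟩ := part3 τ hτ
    refine ⟨hdet, isSymm_of hsym', posdef2 _ hdet hsym' htr, hqp, ?_⟩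
    intro B hBdet hBsym hBpd hτB
    have hdB := posdef_diag B hBpd
    have hB := (main_pos B hBdet (isSymm_entry hBsym)
      (by rw [pOf_re]; linarith [hdB.1, hdB.2])
      (by rw [pOf_im, isSymm_entry hBsym]; ring)).2.2
    rw [hτB] at hB
    exact hB

end
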